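/- Let K be a field of characteristic zero and (Q, ≼) a finite poset. In the quotient of the polynomial algebra K[X_a : a ∈ Q] by the ideal I_Q generated by the elements X_a·X_b − X_a for all a ≼ b in Q, the images of the squarefree monomials ∏_{a ∈ S} X_a, where S ranges over the antichains of Q (including the empty antichain, giving the monomial 1), form a K-vector space basis. -/

import Mathlib

open scoped Classical

/-- The ideal `I_Q` of `K[X_a : a ∈ Q]` generated by the elements `X_a·X_b − X_a` for all
`a ≼ b` in `Q`. -/
noncomputable def antichainIdeal (K : Type*) [Field K] (Q : Type*) [PartialOrder Q] :
    Ideal (MvPolynomial Q K) :=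
  Ideal.span {p | ∃ a b : Q, a ≤ b ∧
    p = MvPolynomial.X a * MvPolynomial.X b - MvPolynomial.X a}

section Aux

variable {Q : Type*} [Fintype Q] [PartialOrder Q]

/-- The upper set generated by a finset, as a finset. -/
noncomputable def upF (S : Finset Q) : Finset Q :=
  Finset.univ.filter (fun x => ∃ s ∈ S, s ≤ x)

lemma mem_upF {S : Finset Q} {x : Q} : x ∈ upF S ↔ ∃ s ∈ S, s ≤ x := by
  simp [upF]

lemma subset_upF (S : Finset Q) : S ⊆ upF S :=
  fun x hx => mem_upF.2 ⟨x, hx, le_refl x⟩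

lemma upF_upper {S : Finset Q} {a b : Q} (ha : a ∈ upF S) (hab : a ≤ b) : b ∈ upF S := by
  obtain ⟨s, hs, hsa⟩ := mem_upF.1 ha
  exact mem_upF.2 ⟨s, hs, hsa.trans hab⟩

lemma upF_subset_of_subset {S T : Finset Q} (h : T ⊆ upF S) : upF T ⊆ upF S := by
  intro x hx
  obtain ⟨t, ht, htx⟩ := mem_upF.1 hx
  exact upF_upper (h ht) htx

lemma antichain_subset_of_up {S T : Finset Q}
    (hS : IsAntichain (· ≤ ·) (S : Set Q)) (h1 : S ⊆ upF T) (h2 : T ⊆ upF S) : S ⊆ T := by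
  intro s hs
  obtain ⟨t, ht, hts⟩ := mem_upF.1 (h1 hs)
  obtain ⟨s', hs', hst⟩ := mem_upF.1 (h2 ht)
  have hss : s' = s := by
    by_contra hne
    exact hS (by exact_mod_cast hs') (by exact_mod_cast hs) hne (hst.trans hts)
  have : t = s := le_antisymm hts (hss ▸ hst)
  exact this ▸ ht

lemma antichain_upF_inj {S T : Finset Q}
    (hS : IsAntichain (· ≤ ·) (S : Set Q)) (hT : IsAntichain (· ≤ ·) (T : Set Q))
    (h : upF S = upF T) : S = T := by
  apply Finset.Subset.antisymm
  · exact antichain_subset_of_up hS (h ▸ subset_upF S) (h ▸ subset_upF T)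
  · exact antichain_subset_of_up hT (h.symm ▸ subset_upF T) (h.symm ▸ subset_upF S)

end Aux

section Main

variable {K Q : Type*} [Field K] [CharZero K] [Fintype Q] [PartialOrder Q]

local notation "π" => Ideal.Quotient.mk (antichainIdeal K Q)

lemma quot_mul_of_le {a b : Q} (h : a ≤ b) :
    (π (MvPolynomial.X a * MvPolynomial.X b) : MvPolynomial Q K ⧸ antichainIdeal K Q)
      = π (MvPolynomial.X a) := by
  rw [Ideal.Quotient.mk_eq_mk_iff_sub_mem]
  exact Ideal.subset_span ⟨a, b, h, rfl⟩

lemma quot_prod_mem_span (T : Finset Q) :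
    (π (∏ a ∈ T, MvPolynomial.X a) : MvPolynomial Q K ⧸ antichainIdeal K Q) ∈
      Submodule.span K (Set.range (fun S : {S : Finset Q // IsAntichain (· ≤ ·) (S : Set Q)} =>
        (π (∏ a ∈ S.1, MvPolynomial.X a) : MvPolynomial Q K ⧸ antichainIdeal K Q))) := by
  induction T using Finset.strongInductionOn with
  | _ T ih =>
    by_cases hT : IsAntichain (· ≤ ·) (T : Set Q)
    · exact Submodule.subset_span ⟨⟨T, hT⟩, rfl⟩
    · simp only [IsAntichain, Set.Pairwise, Finset.mem_coe] at hT
      push_neg at hT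
      obtain ⟨a, ha, b, hb, hne, hab⟩ := hT
      simp only [Pi.compl_apply, compl_iff_not, not_not] at hab
      have hbe : b ∈ T := hb
      have hae : a ∈ T.erase b := Finset.mem_erase.2 ⟨fun h => hne (h ▸ rfl), ha⟩
      have key : (π (∏ x ∈ T, MvPolynomial.X x) : MvPolynomial Q K ⧸ antichainIdeal K Q)
          = π (∏ x ∈ T.erase b, MvPolynomial.X x) := by
        rw [← Finset.mul_prod_erase T _ hbe, ← Finset.mul_prod_erase (T.erase b) _ hae]
        rw [← mul_assoc, mul_comm (MvPolynomial.X b) (MvPolynomial.X a)]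
        rw [map_mul, quot_mul_of_le hab, ← map_mul]
      rw [key]
      exact ih _ (Finset.erase_ssubset hbe)

set_option synthInstance.maxHeartbeats 1000000
set_option maxHeartbeats 1000000

lemma quot_X_pow (a : Q) {n : ℕ} (hn : n ≠ 0) :
    ((π (MvPolynomial.X a) : MvPolynomial Q K ⧸ antichainIdeal K Q)) ^ n
      = π (MvPolynomial.X a) := by
  induction n with
  | zero => exact absurd rfl hn
  | succ n ih =>
    rcases Nat.eq_zero_or_pos n with h | h
    · simp [h]
    · rw [pow_succ, ih h.ne', ← map_mul, quot_mul_of_le (le_refl a)]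

lemma quot_monomial (d : Q →₀ ℕ) :
    (π (MvPolynomial.monomial d (1 : K)) : MvPolynomial Q K ⧸ antichainIdeal K Q)
      = π (∏ a ∈ d.support, MvPolynomial.X a) := by
  rw [MvPolynomial.monomial_eq, map_one, one_mul, Finsupp.prod, map_prod, map_prod]
  refine Finset.prod_congr rfl fun a ha => ?_
  rw [map_pow]
  exact quot_X_pow a (Finsupp.mem_support_iff.1 ha)

lemma quot_span_top :
    Submodule.span K (Set.range (fun S : {S : Finset Q // IsAntichain (· ≤ ·) (S : Set Q)} =>
        (π (∏ a ∈ S.1, MvPolynomial.X a) : MvPolynomial Q K ⧸ antichainIdeal K Q))) = ⊤ := by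
  rw [eq_top_iff]
  rintro x -
  obtain ⟨p, rfl⟩ := Ideal.Quotient.mk_surjective x
  rw [MvPolynomial.as_sum p, map_sum]
  refine Submodule.sum_mem _ fun d hd => ?_
  have h1 : (MvPolynomial.monomial d (MvPolynomial.coeff d p) : MvPolynomial Q K)
      = MvPolynomial.coeff d p • MvPolynomial.monomial d 1 := by
    simp [MvPolynomial.smul_monomial]
  have h2 : (π (MvPolynomial.coeff d p • MvPolynomial.monomial d (1:K)))
      = MvPolynomial.coeff d p • π (MvPolynomial.monomial d (1:K)) := by
    rw [← Ideal.Quotient.mkₐ_eq_mk K, map_smul]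
  rw [h1, h2, quot_monomial]
  exact Submodule.smul_mem _ _ (quot_prod_mem_span _)

lemma eval_mem_ideal (S₀ : Finset Q) {p : MvPolynomial Q K} (hp : p ∈ antichainIdeal K Q) :
    MvPolynomial.aeval (fun a => if a ∈ upF S₀ then (1:K) else 0) p = 0 := by
  have hle : antichainIdeal K Q ≤ RingHom.ker
      (MvPolynomial.aeval (fun a => if a ∈ upF S₀ then (1:K) else 0)).toRingHom := by
    rw [antichainIdeal, Ideal.span_le]
    rintro q ⟨a, b, hab, rfl⟩
    simp only [SetLike.mem_coe, RingHom.mem_ker, AlgHom.toRingHom_eq_coe, RingHom.coe_coe,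
      map_sub, map_mul, MvPolynomial.aeval_X]
    by_cases h : a ∈ upF S₀
    · rw [if_pos h, if_pos (upF_upper h hab)]; ring
    · rw [if_neg h]; ring
  exact hle hp

lemma prod_ite_subset (S U : Finset Q) :
    (∏ a ∈ S, (if a ∈ U then (1:K) else 0)) = if S ⊆ U then 1 else 0 := by
  by_cases h : S ⊆ U
  · rw [if_pos h]
    exact Finset.prod_eq_one fun a ha => if_pos (h ha)
  · rw [if_neg h]
    obtain ⟨a, ha, hnot⟩ := Finset.not_subset.1 h
    exact Finset.prod_eq_zero ha (if_neg hnot)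

lemma coeffs_zero (c : {S : Finset Q // IsAntichain (· ≤ ·) (S : Set Q)} → K)
    (h : ∀ S₀ : {S : Finset Q // IsAntichain (· ≤ ·) (S : Set Q)},
      ∑ S : {S : Finset Q // IsAntichain (· ≤ ·) (S : Set Q)},
        c S * (if S.1 ⊆ upF S₀.1 then (1:K) else 0) = 0) :
    ∀ S, c S = 0 := by
  suffices H : ∀ n (S : {S : Finset Q // IsAntichain (· ≤ ·) (S : Set Q)}),
      (upF S.1).card ≤ n → c S = 0 from fun S => H _ S le_rfl
  intro n
  induction n with
  | zero =>
    intro S hS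
    have hup : upF S.1 = ∅ := Finset.card_eq_zero.1 (Nat.le_zero.1 hS)
    have hSempty : S.1 = ∅ := Finset.subset_empty.1 (hup ▸ subset_upF S.1)
    have hsum := h S
    rw [Finset.sum_eq_single S] at hsum
    · rw [if_pos (subset_upF S.1), mul_one] at hsum; exact hsum
    · intro S' _ hne
      by_cases hsub : S'.1 ⊆ upF S.1
      · exfalso
        apply hne
        apply Subtype.ext
        have : S'.1 = ∅ := Finset.subset_empty.1 (hup ▸ hsub)
        rw [this, hSempty]
      · rw [if_neg hsub, mul_zero]
    · intro habs
      exact absurd (Finset.mem_univ S) habs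
  | succ n ih =>
    intro S hS
    have hsum := h S
    rw [Finset.sum_eq_single S] at hsum
    · rw [if_pos (subset_upF S.1), mul_one] at hsum; exact hsum
    · intro S' _ hne
      by_cases hsub : S'.1 ⊆ upF S.1
      · have hssub : upF S'.1 ⊂ upF S.1 := by
          refine (upF_subset_of_subset hsub).ssubset_of_ne ?_
          intro heq
          exact hne (Subtype.ext (antichain_upF_inj S'.2 S.2 heq))
        have hcard : (upF S'.1).card ≤ n :=
          Nat.lt_succ_iff.1 (lt_of_lt_of_le (Finset.card_lt_card hssub) hS)
        rw [ih S' hcard, zero_mul]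
      · rw [if_neg hsub, mul_zero]
    · intro habs
      exact absurd (Finset.mem_univ S) habs

lemma quot_li :
    LinearIndependent K (fun S : {S : Finset Q // IsAntichain (· ≤ ·) (S : Set Q)} =>
      (π (∏ a ∈ S.1, MvPolynomial.X a) : MvPolynomial Q K ⧸ antichainIdeal K Q)) := by
  rw [Fintype.linearIndependent_iff]
  intro c hc
  apply coeffs_zero c
  intro S₀
  have hmem : (∑ S : {S : Finset Q // IsAntichain (· ≤ ·) (S : Set Q)},
      c S • (∏ a ∈ S.1, MvPolynomial.X a : MvPolynomial Q K)) ∈ antichainIdeal K Q := by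
    rw [← Ideal.Quotient.eq_zero_iff_mem, ← Ideal.Quotient.mkₐ_eq_mk K, map_sum]
    simp only [map_smul, Ideal.Quotient.mkₐ_eq_mk K]
    exact hc
  have h0 := eval_mem_ideal S₀.1 hmem
  rw [map_sum] at h0
  simp only [map_smul, map_prod, MvPolynomial.aeval_X, smul_eq_mul] at h0
  simpa only [prod_ite_subset] using h0

end Main

/-- In the quotient `K[X_a : a ∈ Q] ⧸ I_Q`, the images of the squarefree monomials
`∏_{a ∈ S} X_a`, for `S` ranging over the antichains of `Q` (including the empty
antichain, giving `1`), form a `K`-vector space basis. -/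
theorem antichain_monomials_basis {K Q : Type*} [Field K] [CharZero K]
    [Fintype Q] [PartialOrder Q] :
    ∃ b : Module.Basis {S : Finset Q // IsAntichain (· ≤ ·) (S : Set Q)} K
        (MvPolynomial Q K ⧸ antichainIdeal K Q),
      ∀ S : {S : Finset Q // IsAntichain (· ≤ ·) (S : Set Q)},
        b S = Ideal.Quotient.mk (antichainIdeal K Q) (∏ a ∈ S.1, MvPolynomial.X a) := by
  exact ⟨Module.Basis.mk quot_li quot_span_top.ge, fun S => Module.Basis.mk_apply _ _ _⟩
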